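/- Let f be elementary cellular automaton rule 6, f(x)_i = 1 iff x_{i-1}x_ix_{i+1} ∈ {001, 010}. Then f((1100)^ℤ) = (0001)^ℤ and (0001)^ℤ has no other f-preimage of period 4; also f((00001)^ℤ) = (00011)^ℤ and (00011)^ℤ has no other f-preimage of period 5. Consequently f has no weak inverse cellular automaton of radius 2. -/

import Mathlib

private lemma shift_per (n : ℤ) (y : ℤ → Bool) (h : ∀ i, y (i + n) = y i) :
    ∀ (k : ℤ) (i : ℤ), y (i + n * k) = y i := by
  intro k
  induction k using Int.induction_on with
  | zero => simp
  | succ k ih =>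
      intro i
      have h1 := h (i + n * k)
      have e : i + n * k + n = i + n * (k + 1) := by ring
      rw [e] at h1
      rw [h1]; exact ih i
  | pred k ih =>
      intro i
      have h1 := h (i + n * (-k - 1))
      have e : i + n * (-k - 1) + n = i + n * (-k : ℤ) := by ring
      rw [e] at h1
      rw [← h1]; exact ih i

private lemma per_mod (n : ℤ) (y : ℤ → Bool) (h : ∀ i, y (i + n) = y i) (i : ℤ) :
    y i = y (i % n) := by
  have h1 := shift_per n y h (i / n) (i % n)
  rw [Int.emod_add_mul_ediv i n] at h1
  exact h1

theorem stmt_14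
    (f : (ℤ → Bool) → (ℤ → Bool))
    (hf : ∀ x i, f x i = (!(x (i - 1)) && xor (x i) (x (i + 1))))
    (p4 q4 p5 q5 : ℤ → Bool)
    (hp4 : ∀ i : ℤ, p4 i = decide (i % 4 = 0 ∨ i % 4 = 1))
    (hq4 : ∀ i : ℤ, q4 i = decide (i % 4 = 3))
    (hp5 : ∀ i : ℤ, p5 i = decide (i % 5 = 4))
    (hq5 : ∀ i : ℤ, q5 i = decide (i % 5 = 3 ∨ i % 5 = 4)) :
    f p4 = q4 ∧
    (∀ y : ℤ → Bool, (∀ i : ℤ, y (i + 4) = y i) → f y = q4 → y = p4) ∧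
    f p5 = q5 ∧
    (∀ y : ℤ → Bool, (∀ i : ℤ, y (i + 5) = y i) → f y = q5 → y = p5) ∧
    ¬ ∃ g : (ℤ → Bool) → (ℤ → Bool),
        (∃ G : (Fin 5 → Bool) → Bool,
          ∀ (x : ℤ → Bool) (i : ℤ), g x i = G (fun k => x (i - 2 + (k : ℤ)))) ∧
        ∀ x, f (g (f x)) = f x := by
  have H1 : f p4 = q4 := by
    funext i
    rw [hf, hp4, hp4, hp4, hq4]
    have h : i % 4 = 0 ∨ i % 4 = 1 ∨ i % 4 = 2 ∨ i % 4 = 3 := by omega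
    rcases h with h | h | h | h
    · rw [h, show (i - 1) % 4 = 3 from by omega, show (i + 1) % 4 = 1 from by omega]; decide
    · rw [h, show (i - 1) % 4 = 0 from by omega, show (i + 1) % 4 = 2 from by omega]; decide
    · rw [h, show (i - 1) % 4 = 1 from by omega, show (i + 1) % 4 = 3 from by omega]; decide
    · rw [h, show (i - 1) % 4 = 2 from by omega, show (i + 1) % 4 = 0 from by omega]; decide
  have H3 : f p5 = q5 := by
    funext i
    rw [hf, hp5, hp5, hp5, hq5]
    have h : i % 5 = 0 ∨ i % 5 = 1 ∨ i % 5 = 2 ∨ i % 5 = 3 ∨ i % 5 = 4 := by omega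
    rcases h with h | h | h | h | h
    · rw [h, show (i - 1) % 5 = 4 from by omega, show (i + 1) % 5 = 1 from by omega]; decide
    · rw [h, show (i - 1) % 5 = 0 from by omega, show (i + 1) % 5 = 2 from by omega]; decide
    · rw [h, show (i - 1) % 5 = 1 from by omega, show (i + 1) % 5 = 3 from by omega]; decide
    · rw [h, show (i - 1) % 5 = 2 from by omega, show (i + 1) % 5 = 4 from by omega]; decide
    · rw [h, show (i - 1) % 5 = 3 from by omega, show (i + 1) % 5 = 0 from by omega]; decide
  have H2 : ∀ y : ℤ → Bool, (∀ i : ℤ, y (i + 4) = y i) → f y = q4 → y = p4 := by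
    intro y hper hfy
    have hm1 : y (-1) = y 3 := by have := hper (-1); norm_num at this; exact this.symm
    have h4 : y 4 = y 0 := by have := hper 0; norm_num at this; exact this
    have e0 : (!(y 3) && xor (y 0) (y 1)) = false := by
      have h := congrFun hfy 0
      rw [hf, hq4] at h
      rw [show (0:ℤ) - 1 = -1 from by decide, show (0:ℤ) + 1 = 1 from by decide,
          show decide ((0:ℤ) % 4 = 3) = false from by decide, hm1] at h
      exact h
    have e1 : (!(y 0) && xor (y 1) (y 2)) = false := by
      have h := congrFun hfy 1
      rw [hf, hq4] at h
      rw [show (1:ℤ) - 1 = 0 from by decide, show (1:ℤ) + 1 = 2 from by decide,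
          show decide ((1:ℤ) % 4 = 3) = false from by decide] at h
      exact h
    have e2 : (!(y 1) && xor (y 2) (y 3)) = false := by
      have h := congrFun hfy 2
      rw [hf, hq4] at h
      rw [show (2:ℤ) - 1 = 1 from by decide, show (2:ℤ) + 1 = 3 from by decide,
          show decide ((2:ℤ) % 4 = 3) = false from by decide] at h
      exact h
    have e3 : (!(y 2) && xor (y 3) (y 0)) = true := by
      have h := congrFun hfy 3
      rw [hf, hq4] at h
      rw [show (3:ℤ) - 1 = 2 from by decide, show (3:ℤ) + 1 = 4 from by decide,
          show decide ((3:ℤ) % 4 = 3) = true from by decide, h4] at h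
      exact h
    have key : ∀ a b c d : Bool, (!d && xor a b) = false → (!a && xor b c) = false →
        (!b && xor c d) = false → (!c && xor d a) = true →
        a = true ∧ b = true ∧ c = false ∧ d = false := by decide
    obtain ⟨ka, kb, kc, kd⟩ := key (y 0) (y 1) (y 2) (y 3) e0 e1 e2 e3
    funext i
    rw [per_mod 4 y hper i, hp4]
    have h : i % 4 = 0 ∨ i % 4 = 1 ∨ i % 4 = 2 ∨ i % 4 = 3 := by omega
    rcases h with h | h | h | h <;> rw [h] <;> simp [ka, kb, kc, kd]
  have H4 : ∀ y : ℤ → Bool, (∀ i : ℤ, y (i + 5) = y i) → f y = q5 → y = p5 := by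
    intro y hper hfy
    have hm1 : y (-1) = y 4 := by have := hper (-1); norm_num at this; exact this.symm
    have h5 : y 5 = y 0 := by have := hper 0; norm_num at this; exact this
    have e0 : (!(y 4) && xor (y 0) (y 1)) = false := by
      have h := congrFun hfy 0
      rw [hf, hq5] at h
      rw [show (0:ℤ) - 1 = -1 from by decide, show (0:ℤ) + 1 = 1 from by decide,
          show decide ((0:ℤ) % 5 = 3 ∨ (0:ℤ) % 5 = 4) = false from by decide, hm1] at h
      exact h
    have e1 : (!(y 0) && xor (y 1) (y 2)) = false := by
      have h := congrFun hfy 1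
      rw [hf, hq5] at h
      rw [show (1:ℤ) - 1 = 0 from by decide, show (1:ℤ) + 1 = 2 from by decide,
          show decide ((1:ℤ) % 5 = 3 ∨ (1:ℤ) % 5 = 4) = false from by decide] at h
      exact h
    have e2 : (!(y 1) && xor (y 2) (y 3)) = false := by
      have h := congrFun hfy 2
      rw [hf, hq5] at h
      rw [show (2:ℤ) - 1 = 1 from by decide, show (2:ℤ) + 1 = 3 from by decide,
          show decide ((2:ℤ) % 5 = 3 ∨ (2:ℤ) % 5 = 4) = false from by decide] at h
      exact h
    have e3 : (!(y 2) && xor (y 3) (y 4)) = true := by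
      have h := congrFun hfy 3
      rw [hf, hq5] at h
      rw [show (3:ℤ) - 1 = 2 from by decide, show (3:ℤ) + 1 = 4 from by decide,
          show decide ((3:ℤ) % 5 = 3 ∨ (3:ℤ) % 5 = 4) = true from by decide] at h
      exact h
    have e4 : (!(y 3) && xor (y 4) (y 0)) = true := by
      have h := congrFun hfy 4
      rw [hf, hq5] at h
      rw [show (4:ℤ) - 1 = 3 from by decide, show (4:ℤ) + 1 = 5 from by decide,
          show decide ((4:ℤ) % 5 = 3 ∨ (4:ℤ) % 5 = 4) = true from by decide, h5] at h
      exact h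
    have key : ∀ a b c d e : Bool, (!e && xor a b) = false → (!a && xor b c) = false →
        (!b && xor c d) = false → (!c && xor d e) = true → (!d && xor e a) = true →
        a = false ∧ b = false ∧ c = false ∧ d = false ∧ e = true := by decide
    obtain ⟨ka, kb, kc, kd, ke⟩ := key (y 0) (y 1) (y 2) (y 3) (y 4) e0 e1 e2 e3 e4
    funext i
    rw [per_mod 5 y hper i, hp5]
    have h : i % 5 = 0 ∨ i % 5 = 1 ∨ i % 5 = 2 ∨ i % 5 = 3 ∨ i % 5 = 4 := by omega
    rcases h with h | h | h | h | h <;> rw [h] <;> simp [ka, kb, kc, kd, ke]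
  refine ⟨H1, H2, H3, H4, ?_⟩
  rintro ⟨g, ⟨G, hG⟩, hw⟩
  have hq4p : ∀ i : ℤ, q4 (i + 4) = q4 i := by
    intro i; rw [hq4, hq4, show (i + 4) % 4 = i % 4 from by omega]
  have hq5p : ∀ i : ℤ, q5 (i + 5) = q5 i := by
    intro i; rw [hq5, hq5, show (i + 5) % 5 = i % 5 from by omega]
  have hg4per : ∀ i : ℤ, g q4 (i + 4) = g q4 i := by
    intro i; rw [hG, hG]
    congr 1; funext k
    rw [show i + 4 - 2 + (k : ℤ) = (i - 2 + (k : ℤ)) + 4 from by ring, hq4p]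
  have hg5per : ∀ i : ℤ, g q5 (i + 5) = g q5 i := by
    intro i; rw [hG, hG]
    congr 1; funext k
    rw [show i + 5 - 2 + (k : ℤ) = (i - 2 + (k : ℤ)) + 5 from by ring, hq5p]
  have hfq4 : f (g q4) = q4 := by have := hw p4; rw [H1] at this; exact this
  have hfq5 : f (g q5) = q5 := by have := hw p5; rw [H3] at this; exact this
  have hg4 : g q4 = p4 := H2 _ hg4per hfq4
  have hg5 : g q5 = p5 := H4 _ hg5per hfq5
  have hw1 : g q4 1 = g q5 6 := by
    rw [hG, hG]
    congr 1
    funext k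
    fin_cases k <;> simp [hq4, hq5]
  rw [hg4, hg5, hp4, hp5] at hw1
  norm_num at hw1
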